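/- arXiv:1011.2950 — 2 statements merged into one kernel-verified Lean document; each statement's English description precedes it below -/
import Mathlib

section
/- Let ν ∈ N with ⟨ν, e_i⟩ > 0 for all 1 ≤ i ≤ d, let s ≥ 1 be an integer and let 1 ≤ k ≤ d be such that φ_k(ν) ≤ s < φ_{k+1}(ν). If 1 ≤ j ≤ d and ⟨ν, e_j⟩ ≤ s, then e_j belongs to ℓ_k(ν), the ℚ-span of the summands of the algorithm vector w_k. -/
open scoped BigOperators Classical

namespace QO

/-- The standard pairing `⟨ν, m⟩ = ∑ i, ν i * m i` on `ℚ^d`. -/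
def pair (d : ℕ) (ν m : Fin d → ℚ) : ℚ := ∑ i, ν i * m i

/-- `E d lam i` is the `i`-th standard basis vector of `ℚ^d` for `1 ≤ i ≤ d`,
and equals the characteristic exponent `λ_{i-d}` for `d + 1 ≤ i` (1-based indexing). -/
def E (d : ℕ) (lam : ℕ → Fin d → ℚ) (i : ℕ) : Fin d → ℚ :=
  if 1 ≤ i ∧ i ≤ d then (fun j => if (j : ℕ) = i - 1 then 1 else 0) else lam (i - d)

/-- The lattice `M_j = ℤ^d + ℤλ_1 + ⋯ + ℤλ_j`, as an additive subgroup of `ℚ^d`. -/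
def Mlat (d : ℕ) (lam : ℕ → Fin d → ℚ) : ℕ → AddSubgroup (Fin d → ℚ)
  | 0 => AddSubgroup.closure (Set.range fun i : Fin d => (fun j => if j = i then (1 : ℚ) else 0))
  | (j + 1) => Mlat d lam j ⊔ AddSubgroup.closure {lam (j + 1)}

/-- The dual lattice `N` of `M = M_g`. -/
def Ndual (d g : ℕ) (lam : ℕ → Fin d → ℚ) : Set (Fin d → ℚ) :=
  { ν | ∀ m ∈ Mlat d lam g, ∃ z : ℤ, pair d ν m = (z : ℚ) }

/-- Admissible index sets for `J_k`: `k` indices in `{1, …, d+g}`, at most one of which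
exceeds `d`, whose associated vectors are linearly independent over `ℚ`. -/
def IdxOk (d g : ℕ) (lam : ℕ → Fin d → ℚ) (k : ℕ) (I : Finset ℕ) : Prop :=
  I.card = k ∧ I ⊆ Finset.Icc 1 (d + g) ∧ (I.filter fun i => d + 1 ≤ i).card ≤ 1 ∧
    LinearIndependent ℚ (fun i : {x // x ∈ I} => E d lam i.1)

/-- The set `J_k` of sums `e_{j_1} + ⋯ + e_{j_k}`. -/
def Jset (d g : ℕ) (lam : ℕ → Fin d → ℚ) (k : ℕ) : Set (Fin d → ℚ) :=
  { w | ∃ I : Finset ℕ, IdxOk d g lam k I ∧ w = ∑ i ∈ I, E d lam i }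

/-- The set `J_k`, as a finite set. -/
noncomputable def Jfin (d g : ℕ) (lam : ℕ → Fin d → ℚ) (k : ℕ) : Finset (Fin d → ℚ) :=
  ((Finset.Icc 1 (d + g)).powerset.filter fun I => IdxOk d g lam k I).image
    fun I => ∑ i ∈ I, E d lam i

/-- The support function `ord_{J_k}(ν) = min_{w ∈ J_k} ⟨ν, w⟩`. -/
noncomputable def ordJ (d g : ℕ) (lam : ℕ → Fin d → ℚ) (k : ℕ) (ν : Fin d → ℚ) : ℚ :=
  if h : (Jfin d g lam k).Nonempty then ((Jfin d g lam k).image (pair d ν)).min' (h.image _)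
  else 0

/-- `φ_k(ν) = ord_{J_k}(ν) - ord_{J_{k-1}}(ν)` (note `ord_{J_0} = 0`, hence also `φ_0 = 0`). -/
noncomputable def phiJ (d g : ℕ) (lam : ℕ → Fin d → ℚ) (k : ℕ) (ν : Fin d → ℚ) : ℚ :=
  ordJ d g lam k ν - ordJ d g lam (k - 1) ν

/-- The sort key of the total order `≤_ν` on the indices `1, …, d+g`: sort by the value
`⟨ν, ·⟩`, breaking ties (in particular ties between an `e_i` with `i ≤ d` and a `λ_j`)
by the index, so that `e_i` is placed first. -/
noncomputable def keyIdx (d : ℕ) (lam : ℕ → Fin d → ℚ) (ν : Fin d → ℚ) (i : ℕ) : ℚ ×ₗ ℕ :=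
  toLex (pair d ν (E d lam i), i)

/-- The `≤_ν`-least element of a finite set of indices. -/
noncomputable def leastIdx (d : ℕ) (lam : ℕ → Fin d → ℚ) (ν : Fin d → ℚ) (S : Finset ℕ) : ℕ :=
  if h : S.Nonempty then (ofLex ((S.image (keyIdx d lam ν)).min' (h.image _))).2 else 0

/-- The `≤_ν`-greatest element of a finite set of indices. -/
noncomputable def greatestIdx (d : ℕ) (lam : ℕ → Fin d → ℚ) (ν : Fin d → ℚ)
    (S : Finset ℕ) : ℕ :=
  if h : S.Nonempty then (ofLex ((S.image (keyIdx d lam ν)).max' (h.image _))).2 else 0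

/-- The `ℚ`-span of the vectors indexed by `I`. -/
def spanOf (d : ℕ) (lam : ℕ → Fin d → ℚ) (I : Finset ℕ) : Submodule ℚ (Fin d → ℚ) :=
  Submodule.span ℚ ((fun i => E d lam i) '' (I : Set ℕ))

/-- `n(k)`: the index `n` such that `λ_n` is a summand of `w_k`, and `0` if there is none. -/
noncomputable def nVal (d : ℕ) (I : Finset ℕ) : ℕ :=
  if h : (I.filter fun i => d + 1 ≤ i).Nonempty then (I.filter fun i => d + 1 ≤ i).min' h - d
  else 0

/-- `t(k)`: the least `1 ≤ j ≤ g` with `λ_j ∉ ℓ_k(ν)`, and `g + 1` if there is none. -/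
noncomputable def tVal (d g : ℕ) (lam : ℕ → Fin d → ℚ) (I : Finset ℕ) : ℕ :=
  if h : ((Finset.Icc 1 g).filter fun j => lam j ∉ spanOf d lam I).Nonempty then
    ((Finset.Icc 1 g).filter fun j => lam j ∉ spanOf d lam I).min' h
  else g + 1

/-- `m(k)`: the index `m` with `({e_1, …, e_d} ∩ ℓ_k(ν)) ∖ {summands of w_k} = {e_m}`,
and `0` if this set is empty. -/
noncomputable def mVal (d : ℕ) (lam : ℕ → Fin d → ℚ) (I : Finset ℕ) : ℕ :=
  if h : (((Finset.Icc 1 d).filter fun i => E d lam i ∈ spanOf d lam I) \ I).Nonempty then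
    (((Finset.Icc 1 d).filter fun i => E d lam i ∈ spanOf d lam I) \ I).min' h
  else 0

/-- `i(k)`: the `≤_ν`-least index `1 ≤ i ≤ d + g` with `w_k + e_i ∈ J_{k+1}`. -/
noncomputable def iVal (d g : ℕ) (lam : ℕ → Fin d → ℚ) (ν : Fin d → ℚ) (k : ℕ)
    (I : Finset ℕ) : ℕ :=
  leastIdx d lam ν ((Finset.Icc 1 (d + g)).filter fun i => IdxOk d g lam (k + 1) (insert i I))

/-- One step of the algorithm, from the summands of `w_k` to the summands of `w_{k+1}`:
`a_{k+1} = w_k + e_{i(k)}` and `b_{k+1} = w_k - λ_{n(k)} + λ_{t(k)} + e_{m(k)}`; the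
candidate `b_{k+1}` is discarded when `m(k) = 0` or `t(k) = g + 1`, and otherwise
`w_{k+1} = a_{k+1}` exactly when `⟨ν, a_{k+1}⟩ ≤ ⟨ν, b_{k+1}⟩`. -/
noncomputable def step (d g : ℕ) (lam : ℕ → Fin d → ℚ) (ν : Fin d → ℚ) (k : ℕ)
    (I : Finset ℕ) : Finset ℕ :=
  let a : Finset ℕ := insert (iVal d g lam ν k I) I
  let b : Finset ℕ :=
    insert (mVal d lam I) (insert (d + tVal d g lam I)
      (if nVal d I = 0 then I else I.erase (d + nVal d I)))
  if mVal d lam I = 0 ∨ tVal d g lam I = g + 1 then a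
  else if pair d ν (∑ i ∈ a, E d lam i) ≤ pair d ν (∑ i ∈ b, E d lam i) then a else b

/-- The index sets `W ν k` of summands of the algorithm's vectors `w_k`; the vector `w_1`
is the `≤_ν`-least element of `{e_1, …, e_d, λ_1}`. -/
noncomputable def W (d g : ℕ) (lam : ℕ → Fin d → ℚ) (ν : Fin d → ℚ) : ℕ → Finset ℕ
  | 0 => ∅
  | 1 => {leastIdx d lam ν (insert (d + 1) (Finset.Icc 1 d))}
  | (k + 2) => step d g lam ν (k + 1) (W d g lam ν (k + 1))

/-- The algorithm's vector `w_k`. -/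
noncomputable def wVec (d g : ℕ) (lam : ℕ → Fin d → ℚ) (ν : Fin d → ℚ) (k : ℕ) :
    Fin d → ℚ :=
  ∑ i ∈ W d g lam ν k, E d lam i

/-- `ℓ_k(ν)`: the `ℚ`-span of the summands of `w_k`. -/
noncomputable def ellK (d g : ℕ) (lam : ℕ → Fin d → ℚ) (ν : Fin d → ℚ) (k : ℕ) :
    Submodule ℚ (Fin d → ℚ) :=
  spanOf d lam (W d g lam ν k)

/-- `ℓ_ν^s = span_ℚ{e_j : 1 ≤ j < d + t(k), ⟨ν, e_j⟩ ≤ s}`, where `k` is the index with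
`φ_k(ν) ≤ s < φ_{k+1}(ν)`. -/
noncomputable def ellS (d g : ℕ) (lam : ℕ → Fin d → ℚ) (ν : Fin d → ℚ) (s : ℚ) (k : ℕ) :
    Submodule ℚ (Fin d → ℚ) :=
  Submodule.span ℚ ((fun i => E d lam i) ''
    { i : ℕ | 1 ≤ i ∧ i < d + tVal d g lam (W d g lam ν k) ∧ pair d ν (E d lam i) ≤ s })

/-- `p(k)` (with the convention `λ_0 = 0`). -/
noncomputable def pVal (d g : ℕ) (lam : ℕ → Fin d → ℚ) (ν : Fin d → ℚ) (s : ℚ)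
    (k : ℕ) : ℕ :=
  if nVal d (W d g lam ν k) = 0 then
    if h : ((Finset.Icc 0 g).filter fun j =>
        pair d ν (if j = 0 then (0 : Fin d → ℚ) else lam j) ≤ s).Nonempty then
      ((Finset.Icc 0 g).filter fun j =>
        pair d ν (if j = 0 then (0 : Fin d → ℚ) else lam j) ≤ s).max' h
    else 0
  else
    (insert (nVal d (W d g lam ν k))
      ((Finset.Ioo (nVal d (W d g lam ν k)) (tVal d g lam (W d g lam ν k))).filter fun j =>
        mVal d lam (W d g lam ν k) ≠ 0 ∧
          pair d ν (E d lam (mVal d lam (W d g lam ν k)) - lam (nVal d (W d g lam ν k)) + lam j)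
            ≤ s)).max' (Finset.insert_nonempty _ _)

/-- `q_η`: the index of the `≤_ν`-greatest element of `{e_1, …, e_d} ∩ ℓ(η)`, where
`ℓ(η) = span_ℚ{e_i : η_i ≠ 0}`. -/
noncomputable def qIdx (d : ℕ) (lam : ℕ → Fin d → ℚ) (ν η : Fin d → ℚ) : ℕ :=
  greatestIdx d lam ν ((Finset.Icc 1 d).filter fun i => pair d η (E d lam i) ≠ 0)


/-! ### Auxiliary lemmas -/

open Finset in
lemma pair_sum (d : ℕ) (ν : Fin d → ℚ) {α : Type*} (I : Finset α) (f : α → Fin d → ℚ) :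
    pair d ν (∑ i ∈ I, f i) = ∑ i ∈ I, pair d ν (f i) := by
  simp only [pair, Finset.sum_apply, Finset.mul_sum]
  exact Finset.sum_comm

lemma pair_le_pair (d : ℕ) (ν a b : Fin d → ℚ) (hν : ∀ j, 0 ≤ ν j)
    (hab : ∀ j, a j ≤ b j) : pair d ν a ≤ pair d ν b :=
  Finset.sum_le_sum fun j _ => mul_le_mul_of_nonneg_left (hab j) (hν j)

lemma E_eq_single (d : ℕ) (lam : ℕ → Fin d → ℚ) {i : ℕ} (h1 : 1 ≤ i) (h2 : i ≤ d) :
    E d lam i = Pi.single (⟨i - 1, by omega⟩ : Fin d) 1 := by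
  funext j
  rw [Pi.single_apply]
  simp only [E, if_pos (⟨h1, h2⟩ : 1 ≤ i ∧ i ≤ d)]
  by_cases h : (j : ℕ) = i - 1
  · rw [if_pos h, if_pos (by exact Fin.ext h)]
  · rw [if_neg h, if_neg (by intro hc; exact h (congrArg Fin.val hc))]

lemma pair_single (d : ℕ) (ν : Fin d → ℚ) (a : Fin d) :
    pair d ν (Pi.single a (1 : ℚ)) = ν a := by
  simp [pair, Pi.single_apply]

lemma E_big (d : ℕ) (lam : ℕ → Fin d → ℚ) {n : ℕ} (hn : 1 ≤ n) :
    E d lam (d + n) = lam n := by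
  simp only [E, if_neg (by omega : ¬(1 ≤ d + n ∧ d + n ≤ d))]
  have h : d + n - d = n := by omega
  rw [h]

section Aux
variable {d g : ℕ} {lam : ℕ → Fin d → ℚ} {ν : Fin d → ℚ}

lemma E_lam {i : ℕ} (h : d < i) : E d lam i = lam (i - d) := if_neg (by omega)

lemma nu_pos (hpos : ∀ i, 1 ≤ i → i ≤ d → 0 < pair d ν (E d lam i)) (j : Fin d) :
    0 < ν j := by
  have h := hpos ((j : ℕ) + 1) (by omega) (by omega)
  rw [E_eq_single d lam (by omega) (by omega), pair_single] at h
  have he : (⟨(j:ℕ) + 1 - 1, by omega⟩ : Fin d) = j := Fin.ext (by simp)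
  rwa [he] at h

lemma nu_nonneg (hpos : ∀ i, 1 ≤ i → i ≤ d → 0 < pair d ν (E d lam i)) (j : Fin d) :
    0 ≤ ν j := (nu_pos hpos j).le

lemma pair_lam_mono (hmono : ∀ j, 1 ≤ j → j < g → ∀ i, lam j i ≤ lam (j + 1) i)
    (hpos : ∀ i, 1 ≤ i → i ≤ d → 0 < pair d ν (E d lam i))
    {a b : ℕ} (ha : 1 ≤ a) (hab : a ≤ b) (hb : b ≤ g) :
    pair d ν (lam a) ≤ pair d ν (lam b) := by
  induction b, hab using Nat.le_induction with
  | base => exact le_refl _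
  | succ m ham ih =>
    refine le_trans (ih (by omega)) ?_
    exact pair_le_pair d ν _ _ (nu_nonneg hpos) (hmono m (by omega) (by omega))

lemma Mlat_mono (d : ℕ) (lam : ℕ → Fin d → ℚ) : Monotone (Mlat d lam) := by
  apply monotone_nat_of_le_succ
  intro n
  exact le_sup_left

lemma lam_mem_Mlat {n : ℕ} (hn : 1 ≤ n) : lam n ∈ Mlat d lam n := by
  obtain ⟨m, rfl⟩ : ∃ m, n = m + 1 := ⟨n - 1, by omega⟩
  simp only [Mlat]
  exact AddSubgroup.mem_sup_right (AddSubgroup.subset_closure rfl)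

lemma E_mem_M0 {i : ℕ} (h1 : 1 ≤ i) (h2 : i ≤ d) : E d lam i ∈ Mlat d lam 0 := by
  have he : E d lam i = (fun j => if j = (⟨i - 1, by omega⟩ : Fin d) then (1:ℚ) else 0) := by
    rw [E_eq_single d lam h1 h2]; funext j; rw [Pi.single_apply]
  rw [he, Mlat]
  exact AddSubgroup.subset_closure ⟨_, rfl⟩

lemma lam_not_M0 (hnotin : ∀ j, 1 ≤ j → j ≤ g → lam j ∉ Mlat d lam (j - 1))
    {n : ℕ} (h1 : 1 ≤ n) (h2 : n ≤ g) : lam n ∉ Mlat d lam 0 := fun hc =>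
  hnotin n h1 h2 (Mlat_mono d lam (by omega) hc)

lemma lam_ne_zero (hnotin : ∀ j, 1 ≤ j → j ≤ g → lam j ∉ Mlat d lam (j - 1))
    {n : ℕ} (h1 : 1 ≤ n) (h2 : n ≤ g) : lam n ≠ 0 := fun hc =>
  hnotin n h1 h2 (hc ▸ (Mlat d lam (n-1)).zero_mem)

lemma E_injOn (hnotin : ∀ j, 1 ≤ j → j ≤ g → lam j ∉ Mlat d lam (j - 1)) :
    Set.InjOn (E d lam) ↑(Finset.Icc 1 (d + g)) := by
  have key : ∀ a b : ℕ, a ∈ Finset.Icc 1 (d+g) → b ∈ Finset.Icc 1 (d+g) → a < b →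
      E d lam a ≠ E d lam b := by
    intro a b ha hb hab
    simp only [Finset.mem_Icc] at ha hb
    by_cases hbd : b ≤ d
    · intro hc
      rw [E_eq_single d lam ha.1 (by omega), E_eq_single d lam hb.1 hbd] at hc
      have h1 := congrFun hc ⟨a - 1, by omega⟩
      simp only [Pi.single_apply, if_true] at h1
      split_ifs at h1 with hcc
      · exact absurd (congrArg Fin.val hcc) (by simp only [Fin.val_mk]; omega)
      · exact one_ne_zero h1
    · by_cases had : a ≤ d
      · rw [E_lam (i := b) (by omega)]
        intro hc
        exact lam_not_M0 hnotin (by omega) (by omega) (hc ▸ E_mem_M0 ha.1 had)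
      · rw [E_lam (i := a) (by omega), E_lam (i := b) (by omega)]
        intro hc
        apply hnotin (b - d) (by omega) (by omega)
        have hm : lam (a - d) ∈ Mlat d lam (a - d) := lam_mem_Mlat (by omega)
        exact hc ▸ (Mlat_mono d lam (by omega : a - d ≤ b - d - 1) hm)
  intro a ha b hb hab
  rcases lt_trichotomy a b with h | h | h
  · exact absurd hab (key a b ha hb h)
  · exact h
  · exact absurd hab.symm (key b a hb ha h)

end Aux

section Aux2
variable {d g : ℕ} {lam : ℕ → Fin d → ℚ} {ν : Fin d → ℚ}

lemma indep_sub_basis {I : Finset ℕ} (hI : ∀ i ∈ I, 1 ≤ i ∧ i ≤ d) :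
    LinearIndependent ℚ (fun i : {x // x ∈ I} => E d lam i.1) := by
  have hb : LinearIndependent ℚ (fun i : Fin d => Pi.single i (1:ℚ)) := by
    have h := (Pi.basisFun ℚ (Fin d)).linearIndependent
    have he : (⇑(Pi.basisFun ℚ (Fin d))) = fun i : Fin d => Pi.single i (1:ℚ) := by
      funext i; exact Pi.basisFun_apply ℚ (Fin d) i
    rwa [he] at h
  have h2 := hb.comp
    (fun i : {x // x ∈ I} => (⟨i.1 - 1, by have := hI i.1 i.2; omega⟩ : Fin d))
    (by
      intro x y hxy
      have hx := hI x.1 x.2; have hy := hI y.1 y.2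
      have := congrArg Fin.val hxy
      simp only [Fin.val_mk] at this
      exact Subtype.ext (by omega))
  convert h2 using 1
  funext i
  exact E_eq_single d lam (hI i.1 i.2).1 (hI i.1 i.2).2

lemma mem_spanOf {I : Finset ℕ} {i : ℕ} (hi : i ∈ I) : E d lam i ∈ spanOf d lam I :=
  Submodule.subset_span ⟨i, by simpa using hi, rfl⟩

lemma spanOf_mono {I I' : Finset ℕ} (h : I ⊆ I') : spanOf d lam I ≤ spanOf d lam I' :=
  Submodule.span_mono (Set.image_mono (by exact_mod_cast h))

lemma indep_in_submodule_card_le {I : Finset ℕ} (V : Submodule ℚ (Fin d → ℚ))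
    (hind : LinearIndependent ℚ (fun i : {x // x ∈ I} => E d lam i.1))
    (hmem : ∀ i ∈ I, E d lam i ∈ V) : I.card ≤ Module.finrank ℚ V := by
  have h2 : LinearIndependent ℚ (fun i : {x // x ∈ I} => (⟨E d lam i.1, hmem i.1 i.2⟩ : V)) := by
    apply LinearIndependent.of_comp V.subtype
    exact hind
  simpa [Fintype.card_coe] using h2.fintype_card_le_finrank

lemma card_filter_span_le (V : Submodule ℚ (Fin d → ℚ)) :
    ((Finset.Icc 1 d).filter fun i => E d lam i ∈ V).card ≤ Module.finrank ℚ V := by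
  apply indep_in_submodule_card_le
  · exact indep_sub_basis (lam := lam) (fun i hi => by
      have := Finset.mem_Icc.mp (Finset.mem_filter.mp hi).1; exact this)
  · exact fun i hi => (Finset.mem_filter.mp hi).2

lemma finrank_spanOf_le (I : Finset ℕ) :
    Module.finrank ℚ (spanOf d lam I) ≤ I.card := by
  have h1 : (E d lam '' (I : Set ℕ)) = ↑(I.image (E d lam)) := (Finset.coe_image).symm
  rw [spanOf, h1]
  exact le_trans (finrank_span_finset_le_card _) Finset.card_image_le

lemma finrank_spanOf_eq {k : ℕ} {I : Finset ℕ}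
    (hcard : I.card = k)
    (hind : LinearIndependent ℚ (fun i : {x // x ∈ I} => E d lam i.1)) :
    Module.finrank ℚ (spanOf d lam I) = k := by
  refine le_antisymm (hcard ▸ finrank_spanOf_le I) ?_
  have := indep_in_submodule_card_le (spanOf d lam I) hind (fun i hi => mem_spanOf hi)
  omega

lemma exists_notin_span {k : ℕ} {S : Finset ℕ}
    (hcard : S.card = k + 1)
    (hind : LinearIndependent ℚ (fun i : {x // x ∈ S} => E d lam i.1))
    (V : Submodule ℚ (Fin d → ℚ)) (hV : Module.finrank ℚ V ≤ k) :
    ∃ u ∈ S, E d lam u ∉ V := by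
  by_contra hcon
  push_neg at hcon
  have := indep_in_submodule_card_le V hind hcon
  omega

lemma exists_basis_notin_span {I : Finset ℕ} {k : ℕ} (hk : k < d)
    (hfr : Module.finrank ℚ (spanOf d lam I) ≤ k) :
    ∃ i, 1 ≤ i ∧ i ≤ d ∧ E d lam i ∉ spanOf d lam I := by
  by_contra hcon
  push_neg at hcon
  have hall : (Finset.Icc 1 d).filter (fun i => E d lam i ∈ spanOf d lam I) = Finset.Icc 1 d := by
    apply Finset.filter_true_of_mem
    intro i hi
    have := Finset.mem_Icc.mp hi
    exact hcon i this.1 this.2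
  have := card_filter_span_le (lam := lam) (spanOf d lam I)
  rw [hall, Nat.card_Icc] at this
  omega

end Aux2

section Aux3
variable {d g : ℕ} {lam : ℕ → Fin d → ℚ} {ν : Fin d → ℚ}

lemma IdxOk_subset {k : ℕ} {I I' : Finset ℕ} (h : IdxOk d g lam k I) (hsub : I' ⊆ I) :
    IdxOk d g lam I'.card I' := by
  obtain ⟨hc, hset, hfil, hind⟩ := h
  refine ⟨rfl, hsub.trans hset, ?_, ?_⟩
  · exact le_trans (Finset.card_le_card (Finset.filter_subset_filter _ hsub)) hfil
  · exact hind.comp (fun x : {x // x ∈ I'} => (⟨x.1, hsub x.2⟩ : {x // x ∈ I}))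
      (fun x y hxy => Subtype.ext (Subtype.mk_eq_mk.mp hxy))

lemma indep_subtype_iff_image {I : Finset ℕ} (hinj : Set.InjOn (E d lam) ↑I) :
    LinearIndependent ℚ (fun i : {x // x ∈ I} => E d lam i.1) ↔
      LinearIndependent ℚ (fun x : ↥(E d lam '' ↑I) => (x : Fin d → ℚ)) := by
  exact linearIndepOn_iff_image hinj

lemma IdxOk_insert {k : ℕ} {I : Finset ℕ} {i : ℕ} (h : IdxOk d g lam k I)
    (hi : i ∈ Finset.Icc 1 (d + g))
    (hsp : E d lam i ∉ spanOf d lam I)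
    (hfil : d + 1 ≤ i → (I.filter fun x => d + 1 ≤ x) = ∅)
    (hinj : Set.InjOn (E d lam) ↑(Finset.Icc 1 (d + g))) :
    IdxOk d g lam (k + 1) (insert i I) := by
  obtain ⟨hc, hset, hfilc, hind⟩ := h
  have hiI : i ∉ I := fun hmem => hsp (mem_spanOf hmem)
  have hinjI : Set.InjOn (E d lam) ↑I := hinj.mono (by exact_mod_cast hset)
  have hinjI' : Set.InjOn (E d lam) ↑(insert i I) := hinj.mono (by
    intro x hx
    simp only [Finset.coe_insert, Set.mem_insert_iff] at hx
    rcases hx with rfl | hx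
    · exact hi
    · exact hset hx)
  refine ⟨by rw [Finset.card_insert_of_notMem hiI, hc], ?_, ?_, ?_⟩
  · exact Finset.insert_subset hi hset
  · rw [Finset.filter_insert]
    split_ifs with hcase
    · rw [hfil hcase]
      simp
    · exact hfilc
  · rw [indep_subtype_iff_image hinjI']
    have h1 : LinearIndependent ℚ (fun x : ↥(E d lam '' ↑I) => (x : Fin d → ℚ)) :=
      (indep_subtype_iff_image hinjI).mp hind
    have h2 := LinearIndepOn.id_insert (x := E d lam i) h1 (by rw [← spanOf]; exact hsp)
    have he : (insert (E d lam i) (E d lam '' ↑I)) = E d lam '' ↑(insert i I) := by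
      rw [Finset.coe_insert, Set.image_insert_eq]
    rwa [he] at h2

lemma ordJ_le {k : ℕ} {I : Finset ℕ} (h : IdxOk d g lam k I) :
    ordJ d g lam k ν ≤ pair d ν (∑ i ∈ I, E d lam i) := by
  have hmem : (∑ i ∈ I, E d lam i) ∈ Jfin d g lam k :=
    Finset.mem_image.mpr ⟨I, Finset.mem_filter.mpr ⟨Finset.mem_powerset.mpr h.2.1, h⟩, rfl⟩
  have hne : (Jfin d g lam k).Nonempty := ⟨_, hmem⟩
  rw [ordJ, dif_pos hne]
  exact Finset.min'_le _ _ (Finset.mem_image_of_mem _ hmem)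

lemma le_ordJ {k : ℕ} (hne : (Jfin d g lam k).Nonempty) {c : ℚ}
    (h : ∀ I, IdxOk d g lam k I → c ≤ pair d ν (∑ i ∈ I, E d lam i)) :
    c ≤ ordJ d g lam k ν := by
  rw [ordJ, dif_pos hne]
  obtain ⟨w, hw, hmin⟩ := Finset.mem_image.mp
    (Finset.min'_mem ((Jfin d g lam k).image (pair d ν)) (hne.image _))
  obtain ⟨I, hI, rfl⟩ := Finset.mem_image.mp hw
  rw [← hmin]
  exact h I (Finset.mem_filter.mp hI).2

lemma leastIdx_mem {S : Finset ℕ} (h : S.Nonempty) : leastIdx d lam ν S ∈ S := by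
  rw [leastIdx, dif_pos h]
  obtain ⟨s, hs, heq⟩ := Finset.mem_image.mp (Finset.min'_mem (S.image (keyIdx d lam ν)) (h.image _))
  rw [← heq]
  simpa [keyIdx] using hs

lemma leastIdx_le {S : Finset ℕ} (h : S.Nonempty) {i : ℕ} (hi : i ∈ S) :
    pair d ν (E d lam (leastIdx d lam ν S)) ≤ pair d ν (E d lam i) := by
  rw [leastIdx, dif_pos h]
  obtain ⟨s, hs, heq⟩ := Finset.mem_image.mp (Finset.min'_mem (S.image (keyIdx d lam ν)) (h.image _))
  have hle : keyIdx d lam ν s ≤ keyIdx d lam ν i := by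
    rw [heq]
    exact Finset.min'_le _ _ (Finset.mem_image_of_mem _ hi)
  rw [← heq]
  have : (ofLex (keyIdx d lam ν s)).2 = s := rfl
  rw [this]
  rcases (Prod.Lex.le_iff).mp hle with hlt | ⟨heq2, _⟩
  · exact le_of_lt hlt
  · exact le_of_eq heq2

end Aux3

section Aux4
variable {d g : ℕ} {lam : ℕ → Fin d → ℚ} {ν : Fin d → ℚ}

lemma pair_add (d : ℕ) (ν a b : Fin d → ℚ) :
    pair d ν (a + b) = pair d ν a + pair d ν b := by
  simp [pair, mul_add, Finset.sum_add_distrib]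

lemma mVal_mem {Wk : Finset ℕ} (h : mVal d lam Wk ≠ 0) :
    mVal d lam Wk ∈ ((Finset.Icc 1 d).filter fun i => E d lam i ∈ spanOf d lam Wk) \ Wk := by
  by_cases hc : (((Finset.Icc 1 d).filter fun i => E d lam i ∈ spanOf d lam Wk) \ Wk).Nonempty
  · rw [mVal, dif_pos hc]
    exact Finset.min'_mem _ _
  · rw [mVal, dif_neg hc] at h
    exact absurd rfl h

lemma mVal_eq_zero {Wk : Finset ℕ}
    (h : ¬ (((Finset.Icc 1 d).filter fun i => E d lam i ∈ spanOf d lam Wk) \ Wk).Nonempty) :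
    mVal d lam Wk = 0 := by
  rw [mVal, dif_neg h]

lemma L_eq_singleton {k : ℕ} {Wk : Finset ℕ} (hW : IdxOk d g lam k Wk)
    (hne : (Wk.filter fun i => d + 1 ≤ i).Nonempty) :
    (Wk.filter fun i => d + 1 ≤ i) = {d + nVal d Wk} ∧ 1 ≤ nVal d Wk ∧ nVal d Wk ≤ g := by
  have hcard : (Wk.filter fun i => d + 1 ≤ i).card = 1 :=
    le_antisymm hW.2.2.1 (Finset.card_pos.mpr hne)
  obtain ⟨x, hx⟩ := Finset.card_eq_one.mp hcard
  have hxL : x ∈ (Wk.filter fun i => d + 1 ≤ i) := hx ▸ Finset.mem_singleton_self x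
  have hxW : x ∈ Wk := (Finset.mem_filter.mp hxL).1
  have hxbig : d + 1 ≤ x := (Finset.mem_filter.mp hxL).2
  have hxle : x ≤ d + g := (Finset.mem_Icc.mp (hW.2.1 hxW)).2
  have hmin : (Wk.filter fun i => d + 1 ≤ i).min' hne = x :=
    le_antisymm (Finset.min'_le _ _ hxL) (Finset.le_min' _ _ _ (fun y hy => by
      rw [hx] at hy; exact (Finset.mem_singleton.mp hy).ge))
  have hnv : nVal d Wk = x - d := by
    rw [nVal, dif_pos hne, hmin]
  refine ⟨by rw [hx]; congr 1; omega, by omega, by omega⟩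

lemma tVal_spec' {Wk : Finset ℕ} {j : ℕ} (hj1 : 1 ≤ j) (hjg : j ≤ g)
    (hnot : lam j ∉ spanOf d lam Wk) :
    1 ≤ tVal d g lam Wk ∧ tVal d g lam Wk ≤ g ∧ tVal d g lam Wk ≤ j ∧
      lam (tVal d g lam Wk) ∉ spanOf d lam Wk := by
  have hjmem : j ∈ (Finset.Icc 1 g).filter fun j => lam j ∉ spanOf d lam Wk :=
    Finset.mem_filter.mpr ⟨Finset.mem_Icc.mpr ⟨hj1, hjg⟩, hnot⟩
  have hne : ((Finset.Icc 1 g).filter fun j => lam j ∉ spanOf d lam Wk).Nonempty := ⟨j, hjmem⟩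
  rw [tVal, dif_pos hne]
  have hmem := Finset.min'_mem ((Finset.Icc 1 g).filter fun j => lam j ∉ spanOf d lam Wk) hne
  have h1 := Finset.mem_Icc.mp (Finset.mem_filter.mp hmem).1
  exact ⟨h1.1, h1.2, Finset.min'_le _ _ hjmem, (Finset.mem_filter.mp hmem).2⟩

lemma span_exchange {k : ℕ} {Wk : Finset ℕ} (hW : IdxOk d g lam k Wk) {n m : ℕ}
    (hnW : d + n ∈ Wk) (hm1 : 1 ≤ m) (hmd : m ≤ d) (hmW : m ∉ Wk)
    (hmsp : E d lam m ∈ spanOf d lam Wk)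
    (hAe : ∀ i ∈ Wk.erase (d + n), 1 ≤ i ∧ i ≤ d) :
    spanOf d lam (insert m (Wk.erase (d + n))) = spanOf d lam Wk := by
  have hmAe : m ∉ Wk.erase (d + n) := fun hmem => hmW (Finset.mem_of_mem_erase hmem)
  have hcard : (insert m (Wk.erase (d + n))).card = k := by
    rw [Finset.card_insert_of_notMem hmAe, Finset.card_erase_of_mem hnW, hW.1]
    have : 1 ≤ k := hW.1 ▸ Finset.card_pos.mpr ⟨_, hnW⟩
    omega
  have hind : LinearIndependent ℚ
      (fun i : {x // x ∈ insert m (Wk.erase (d + n))} => E d lam i.1) := by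
    apply indep_sub_basis
    intro i hi
    rcases Finset.mem_insert.mp hi with rfl | hi'
    · exact ⟨hm1, hmd⟩
    · exact hAe i hi'
  have hle : spanOf d lam (insert m (Wk.erase (d + n))) ≤ spanOf d lam Wk := by
    rw [spanOf]
    apply Submodule.span_le.mpr
    rintro x ⟨i, hi, rfl⟩
    simp only [Finset.coe_insert, Set.mem_insert_iff, Finset.mem_coe] at hi
    rcases hi with rfl | hi'
    · exact hmsp
    · exact mem_spanOf (Finset.mem_of_mem_erase hi')
  apply Submodule.eq_of_le_of_finrank_eq hle
  rw [finrank_spanOf_eq hcard hind, finrank_spanOf_eq hW.1 hW.2.2.2]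

end Aux4

section StepSpec
variable {d g : ℕ} {lam : ℕ → Fin d → ℚ} {ν : Fin d → ℚ}

lemma mVal_ne_zero {Wk : Finset ℕ}
    (hne : (((Finset.Icc 1 d).filter fun i => E d lam i ∈ spanOf d lam Wk) \ Wk).Nonempty) :
    mVal d lam Wk ≠ 0 := by
  rw [mVal, dif_pos hne]
  have hmem := Finset.min'_mem
    (((Finset.Icc 1 d).filter fun i => E d lam i ∈ spanOf d lam Wk) \ Wk) hne
  have h1 := Finset.mem_Icc.mp (Finset.mem_filter.mp (Finset.mem_sdiff.mp hmem).1).1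
  omega

lemma step_spec
    (hnotin : ∀ j, 1 ≤ j → j ≤ g → lam j ∉ Mlat d lam (j - 1))
    (hmono : ∀ j, 1 ≤ j → j < g → ∀ i, lam j i ≤ lam (j + 1) i)
    (hpos : ∀ i, 1 ≤ i → i ≤ d → 0 < pair d ν (E d lam i))
    {k : ℕ} (hkd : k + 1 ≤ d) {Wk : Finset ℕ}
    (hW : IdxOk d g lam k Wk)
    (hOpt : ∀ I, IdxOk d g lam k I →
      pair d ν (∑ i ∈ Wk, E d lam i) ≤ pair d ν (∑ i ∈ I, E d lam i)) :
    IdxOk d g lam (k + 1) (step d g lam ν k Wk) ∧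
    ∀ S, IdxOk d g lam (k + 1) S →
      pair d ν (∑ i ∈ step d g lam ν k Wk, E d lam i) ≤ pair d ν (∑ i ∈ S, E d lam i) := by
  have hinj := E_injOn (g := g) hnotin
  have hfr : Module.finrank ℚ (spanOf d lam Wk) ≤ k := hW.1 ▸ finrank_spanOf_le Wk
  -- the a-candidate is well defined and feasible
  obtain ⟨i0, hi01, hi0d, hi0sp⟩ := exists_basis_notin_span (by omega : k < d) hfr
  have hi0F : i0 ∈ (Finset.Icc 1 (d + g)).filter
      (fun i => IdxOk d g lam (k + 1) (insert i Wk)) :=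
    Finset.mem_filter.mpr ⟨Finset.mem_Icc.mpr ⟨hi01, by omega⟩,
      IdxOk_insert hW (Finset.mem_Icc.mpr ⟨hi01, by omega⟩) hi0sp
        (fun hcon => absurd hcon (by omega)) hinj⟩
  have hFne : ((Finset.Icc 1 (d + g)).filter
      (fun i => IdxOk d g lam (k + 1) (insert i Wk))).Nonempty := ⟨i0, hi0F⟩
  have hiVmem : iVal d g lam ν k Wk ∈ (Finset.Icc 1 (d + g)).filter
      (fun i => IdxOk d g lam (k + 1) (insert i Wk)) := leastIdx_mem hFne
  have hAok : IdxOk d g lam (k + 1) (insert (iVal d g lam ν k Wk) Wk) :=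
    (Finset.mem_filter.mp hiVmem).2
  have hivW : iVal d g lam ν k Wk ∉ Wk := by
    intro hmem
    have h1 := hAok.1
    rw [Finset.insert_eq_self.mpr hmem, hW.1] at h1
    omega
  have hAsum : pair d ν (∑ i ∈ insert (iVal d g lam ν k Wk) Wk, E d lam i)
      = pair d ν (E d lam (iVal d g lam ν k Wk)) + pair d ν (∑ i ∈ Wk, E d lam i) := by
    rw [Finset.sum_insert hivW, pair_add]
  have hstep : step d g lam ν k Wk =
      if mVal d lam Wk = 0 ∨ tVal d g lam Wk = g + 1 then insert (iVal d g lam ν k Wk) Wk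
      else if pair d ν (∑ i ∈ insert (iVal d g lam ν k Wk) Wk, E d lam i) ≤
          pair d ν (∑ i ∈ insert (mVal d lam Wk) (insert (d + tVal d g lam Wk)
            (if nVal d Wk = 0 then Wk else Wk.erase (d + nVal d Wk))), E d lam i)
        then insert (iVal d g lam ν k Wk) Wk
        else insert (mVal d lam Wk) (insert (d + tVal d g lam Wk)
          (if nVal d Wk = 0 then Wk else Wk.erase (d + nVal d Wk))) := rfl
  -- facts about the b-candidate, under the hypothesis that it is considered
  have hBfacts : ¬ (mVal d lam Wk = 0 ∨ tVal d g lam Wk = g + 1) →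
      IdxOk d g lam (k + 1) (insert (mVal d lam Wk) (insert (d + tVal d g lam Wk)
        (if nVal d Wk = 0 then Wk else Wk.erase (d + nVal d Wk)))) ∧
      pair d ν (∑ i ∈ insert (mVal d lam Wk) (insert (d + tVal d g lam Wk)
        (if nVal d Wk = 0 then Wk else Wk.erase (d + nVal d Wk))), E d lam i)
        = pair d ν (E d lam (mVal d lam Wk)) + pair d ν (lam (tVal d g lam Wk))
          + pair d ν (∑ i ∈ Wk.erase (d + nVal d Wk), E d lam i) ∧
      1 ≤ nVal d Wk ∧ d + nVal d Wk ∈ Wk ∧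
      (∀ i ∈ Wk.erase (d + nVal d Wk), 1 ≤ i ∧ i ≤ d) := by
    intro hbc
    push_neg at hbc
    obtain ⟨hm0, ht0⟩ := hbc
    have hmmem := mVal_mem (lam := lam) hm0
    obtain ⟨hmfil, hmW⟩ := Finset.mem_sdiff.mp hmmem
    have hmIcc := Finset.mem_Icc.mp (Finset.mem_filter.mp hmfil).1
    have hmsp : E d lam (mVal d lam Wk) ∈ spanOf d lam Wk := (Finset.mem_filter.mp hmfil).2
    -- Wk has a big element (counting argument)
    have hSesub : Wk.filter (fun i => ¬ d + 1 ≤ i) ⊆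
        (Finset.Icc 1 d).filter (fun i => E d lam i ∈ spanOf d lam Wk) := by
      intro i hi
      obtain ⟨hiW, hile⟩ := Finset.mem_filter.mp hi
      have h1 := Finset.mem_Icc.mp (hW.2.1 hiW)
      exact Finset.mem_filter.mpr ⟨Finset.mem_Icc.mpr ⟨h1.1, by omega⟩, mem_spanOf hiW⟩
    have hFScard : ((Finset.Icc 1 d).filter
        (fun i => E d lam i ∈ spanOf d lam Wk)).card ≤ k :=
      le_trans (card_filter_span_le _) hfr
    have hcards : (Wk.filter (fun i => d + 1 ≤ i)).card
        + (Wk.filter (fun i => ¬ d + 1 ≤ i)).card = k := by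
      rw [← hW.1]
      exact Finset.card_filter_add_card_filter_not _
    have hdisj : Disjoint (Wk.filter (fun i => ¬ d + 1 ≤ i))
        (((Finset.Icc 1 d).filter (fun i => E d lam i ∈ spanOf d lam Wk)) \ Wk) := by
      rw [Finset.disjoint_left]
      intro x hx hx2
      exact (Finset.mem_sdiff.mp hx2).2 (Finset.mem_filter.mp hx).1
    have hunion : (Wk.filter (fun i => ¬ d + 1 ≤ i)) ∪
        (((Finset.Icc 1 d).filter (fun i => E d lam i ∈ spanOf d lam Wk)) \ Wk) ⊆
        (Finset.Icc 1 d).filter (fun i => E d lam i ∈ spanOf d lam Wk) :=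
      Finset.union_subset hSesub (Finset.sdiff_subset)
    have hDpos : 1 ≤ (((Finset.Icc 1 d).filter
        (fun i => E d lam i ∈ spanOf d lam Wk)) \ Wk).card :=
      Finset.card_pos.mpr ⟨_, hmmem⟩
    have hucard := Finset.card_le_card hunion
    rw [Finset.card_union_of_disjoint hdisj] at hucard
    have hLne : (Wk.filter fun i => d + 1 ≤ i).Nonempty := by
      rw [← Finset.card_pos]
      omega
    obtain ⟨hLsing, hn1, hng⟩ := L_eq_singleton hW hLne
    have hnW : d + nVal d Wk ∈ Wk := by
      have : d + nVal d Wk ∈ (Wk.filter fun i => d + 1 ≤ i) := by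
        rw [hLsing]; exact Finset.mem_singleton_self _
      exact (Finset.mem_filter.mp this).1
    have hAebound : ∀ i ∈ Wk.erase (d + nVal d Wk), 1 ≤ i ∧ i ≤ d := by
      intro i hi
      obtain ⟨hine, hiW⟩ := Finset.mem_erase.mp hi
      have h1 := Finset.mem_Icc.mp (hW.2.1 hiW)
      refine ⟨h1.1, ?_⟩
      by_contra hcon
      have : i ∈ (Wk.filter fun i => d + 1 ≤ i) :=
        Finset.mem_filter.mpr ⟨hiW, by omega⟩
      rw [hLsing] at this
      exact hine (Finset.mem_singleton.mp this)
    have hspan : spanOf d lam (insert (mVal d lam Wk) (Wk.erase (d + nVal d Wk)))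
        = spanOf d lam Wk :=
      span_exchange hW hnW hmIcc.1 hmIcc.2 hmW hmsp hAebound
    -- t facts
    have htprop : 1 ≤ tVal d g lam Wk ∧ tVal d g lam Wk ≤ g ∧
        lam (tVal d g lam Wk) ∉ spanOf d lam Wk := by
      by_cases hc : ((Finset.Icc 1 g).filter fun j => lam j ∉ spanOf d lam Wk).Nonempty
      · have hmem := Finset.min'_mem
          ((Finset.Icc 1 g).filter fun j => lam j ∉ spanOf d lam Wk) hc
        rw [tVal, dif_pos hc]
        obtain ⟨h1, h2⟩ := Finset.mem_filter.mp hmem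
        exact ⟨(Finset.mem_Icc.mp h1).1, (Finset.mem_Icc.mp h1).2, h2⟩
      · rw [tVal, dif_neg hc] at ht0
        exact absurd rfl ht0
    obtain ⟨ht1, htg, htnot⟩ := htprop
    -- feasibility of the b-candidate
    have hifred : (if nVal d Wk = 0 then Wk else Wk.erase (d + nVal d Wk))
        = Wk.erase (d + nVal d Wk) := if_neg (by omega)
    have hI1card : (insert (mVal d lam Wk) (Wk.erase (d + nVal d Wk))).card = k := by
      have hk1' : 1 ≤ Wk.card := Finset.card_pos.mpr ⟨_, hnW⟩
      rw [Finset.card_insert_of_notMem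
        (fun hmem => hmW (Finset.mem_of_mem_erase hmem)),
        Finset.card_erase_of_mem hnW, hW.1]
      rw [hW.1] at hk1'
      omega
    have hI1bound : ∀ i ∈ insert (mVal d lam Wk) (Wk.erase (d + nVal d Wk)),
        1 ≤ i ∧ i ≤ d := by
      intro i hi
      rcases Finset.mem_insert.mp hi with rfl | hi'
      · exact hmIcc
      · exact hAebound i hi'
    have hI1fil : ((insert (mVal d lam Wk) (Wk.erase (d + nVal d Wk))).filter
        fun x => d + 1 ≤ x) = ∅ := by
      rw [Finset.filter_eq_empty_iff]
      intro i hi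
      have := hI1bound i hi
      omega
    have hI1ok : IdxOk d g lam k (insert (mVal d lam Wk) (Wk.erase (d + nVal d Wk))) := by
      refine ⟨hI1card, ?_, ?_, ?_⟩
      · intro i hi
        have := hI1bound i hi
        exact Finset.mem_Icc.mpr ⟨this.1, by omega⟩
      · rw [hI1fil]; simp
      · exact indep_sub_basis hI1bound
    have hBok' : IdxOk d g lam (k + 1) (insert (d + tVal d g lam Wk)
        (insert (mVal d lam Wk) (Wk.erase (d + nVal d Wk)))) := by
      apply IdxOk_insert hI1ok (Finset.mem_Icc.mpr ⟨by omega, by omega⟩) ?_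
        (fun _ => hI1fil) hinj
      rw [E_lam (by omega), Nat.add_sub_cancel_left, hspan]
      exact htnot
    have hBcomm : insert (mVal d lam Wk) (insert (d + tVal d g lam Wk)
          (Wk.erase (d + nVal d Wk)))
        = insert (d + tVal d g lam Wk) (insert (mVal d lam Wk)
          (Wk.erase (d + nVal d Wk))) := Finset.insert_comm _ _ _
    have hmnotin : mVal d lam Wk ∉ insert (d + tVal d g lam Wk)
        (Wk.erase (d + nVal d Wk)) := by
      intro hmem
      rcases Finset.mem_insert.mp hmem with heq | hmem'
      · omega
      · exact hmW (Finset.mem_of_mem_erase hmem')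
    have htnotin : d + tVal d g lam Wk ∉ Wk.erase (d + nVal d Wk) := by
      intro hmem
      have := hAebound _ hmem
      omega
    have hBsum : pair d ν (∑ i ∈ insert (mVal d lam Wk) (insert (d + tVal d g lam Wk)
          (Wk.erase (d + nVal d Wk))), E d lam i)
        = pair d ν (E d lam (mVal d lam Wk)) + pair d ν (lam (tVal d g lam Wk))
          + pair d ν (∑ i ∈ Wk.erase (d + nVal d Wk), E d lam i) := by
      rw [Finset.sum_insert hmnotin, pair_add, Finset.sum_insert htnotin, pair_add,
        E_lam (by omega : d < d + tVal d g lam Wk), Nat.add_sub_cancel_left]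
      ring
    rw [hifred]
    exact ⟨hBcomm ▸ hBok', hBsum, hn1, hnW, hAebound⟩
  constructor
  · -- feasibility of the step
    by_cases h1 : mVal d lam Wk = 0 ∨ tVal d g lam Wk = g + 1
    · rw [hstep, if_pos h1]; exact hAok
    · rw [hstep, if_neg h1]
      by_cases h2 : pair d ν (∑ i ∈ insert (iVal d g lam ν k Wk) Wk, E d lam i) ≤
          pair d ν (∑ i ∈ insert (mVal d lam Wk) (insert (d + tVal d g lam Wk)
            (if nVal d Wk = 0 then Wk else Wk.erase (d + nVal d Wk))), E d lam i)
      · rw [if_pos h2]; exact hAok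
      · rw [if_neg h2]; exact (hBfacts h1).1
  · -- optimality of the step
    intro S hS
    have hstepA : pair d ν (∑ i ∈ step d g lam ν k Wk, E d lam i)
        ≤ pair d ν (∑ i ∈ insert (iVal d g lam ν k Wk) Wk, E d lam i) := by
      rw [hstep]
      by_cases h1 : mVal d lam Wk = 0 ∨ tVal d g lam Wk = g + 1
      · rw [if_pos h1]
      · rw [if_neg h1]
        by_cases h2 : pair d ν (∑ i ∈ insert (iVal d g lam ν k Wk) Wk, E d lam i) ≤
            pair d ν (∑ i ∈ insert (mVal d lam Wk) (insert (d + tVal d g lam Wk)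
              (if nVal d Wk = 0 then Wk else Wk.erase (d + nVal d Wk))), E d lam i)
        · rw [if_pos h2]
        · rw [if_neg h2]; exact (not_le.mp h2).le
    by_cases hcase : ∃ u ∈ S, E d lam u ∉ spanOf d lam Wk ∧
        (u ≤ d ∨ (Wk.filter fun i => d + 1 ≤ i) = ∅)
    · -- case a : greedy addition wins
      obtain ⟨u, huS, husp, hualt⟩ := hcase
      have huIcc := hS.2.1 huS
      have hins : IdxOk d g lam (k + 1) (insert u Wk) :=
        IdxOk_insert hW huIcc husp (fun hdu => hualt.resolve_left (by omega)) hinj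
      have huF : u ∈ (Finset.Icc 1 (d + g)).filter
          (fun i => IdxOk d g lam (k + 1) (insert i Wk)) :=
        Finset.mem_filter.mpr ⟨huIcc, hins⟩
      have h1 : pair d ν (E d lam (iVal d g lam ν k Wk)) ≤ pair d ν (E d lam u) :=
        leastIdx_le hFne huF
      have hSe : IdxOk d g lam k (S.erase u) := by
        have h2 := IdxOk_subset hS (Finset.erase_subset u S)
        rwa [Finset.card_erase_of_mem huS, hS.1, Nat.add_sub_cancel] at h2
      have h2 : pair d ν (∑ i ∈ Wk, E d lam i)
          ≤ pair d ν (∑ i ∈ S.erase u, E d lam i) := hOpt _ hSe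
      have h3 : pair d ν (∑ i ∈ S.erase u, E d lam i) + pair d ν (E d lam u)
          = pair d ν (∑ i ∈ S, E d lam i) := by
        rw [← pair_add, ← Finset.sum_erase_add S _ huS]
      linarith [hstepA, hAsum]
    · -- case b : the exchange candidate wins
      push_neg at hcase
      obtain ⟨u0, hu0S, hu0sp⟩ := exists_notin_span hS.1 hS.2.2.2 (spanOf d lam Wk) hfr
      obtain ⟨hu0big, hLne'⟩ := hcase u0 hu0S hu0sp
      have hu0Icc := Finset.mem_Icc.mp (hS.2.1 hu0S)
      -- every other element of S is a small index whose vector lies in the span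
      have hSeprop : ∀ i ∈ S.erase u0, (1 ≤ i ∧ i ≤ d) ∧ E d lam i ∈ spanOf d lam Wk := by
        intro i hi
        obtain ⟨hine, hiS⟩ := Finset.mem_erase.mp hi
        have h1 := Finset.mem_Icc.mp (hS.2.1 hiS)
        have hsmall : i ≤ d := by
          by_contra hcon
          have hifil : i ∈ S.filter (fun x => d + 1 ≤ x) :=
            Finset.mem_filter.mpr ⟨hiS, by omega⟩
          have hufil : u0 ∈ S.filter (fun x => d + 1 ≤ x) :=
            Finset.mem_filter.mpr ⟨hu0S, by omega⟩
          exact hine (Finset.card_le_one.mp hS.2.2.1 i hifil u0 hufil)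
        refine ⟨⟨h1.1, hsmall⟩, ?_⟩
        by_contra hcon
        have := (hcase i hiS hcon).1
        omega
      have hSesub : S.erase u0 ⊆ (Finset.Icc 1 d).filter
          (fun i => E d lam i ∈ spanOf d lam Wk) := by
        intro i hi
        obtain ⟨⟨h1, h2⟩, h3⟩ := hSeprop i hi
        exact Finset.mem_filter.mpr ⟨Finset.mem_Icc.mpr ⟨h1, h2⟩, h3⟩
      have hSecard : (S.erase u0).card = k := by
        rw [Finset.card_erase_of_mem hu0S, hS.1, Nat.add_sub_cancel]
      have hFScard : ((Finset.Icc 1 d).filter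
          (fun i => E d lam i ∈ spanOf d lam Wk)).card ≤ k :=
        le_trans (card_filter_span_le _) hfr
      have hFSeq : S.erase u0 = (Finset.Icc 1 d).filter
          (fun i => E d lam i ∈ spanOf d lam Wk) :=
        Finset.eq_of_subset_of_card_le hSesub (by omega)
      -- mVal is nonzero
      have hDne : (((Finset.Icc 1 d).filter fun i => E d lam i ∈ spanOf d lam Wk)
          \ Wk).Nonempty := by
        rw [← hFSeq]
        by_contra hcon
        rw [Finset.not_nonempty_iff_eq_empty, Finset.sdiff_eq_empty_iff_subset] at hcon
        have heq : S.erase u0 = Wk :=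
          Finset.eq_of_subset_of_card_le hcon (by rw [hW.1, hSecard])
        obtain ⟨x, hx⟩ := hLne'
        obtain ⟨hxW, hxbig⟩ := Finset.mem_filter.mp hx
        have : x ∈ S.erase u0 := heq ▸ hxW
        have := (hSeprop x this).1
        omega
      have hm0 : mVal d lam Wk ≠ 0 := mVal_ne_zero hDne
      -- tVal facts
      have hu0lam : lam (u0 - d) ∉ spanOf d lam Wk := by
        rwa [E_lam (by omega)] at hu0sp
      obtain ⟨ht1, htg, htle, htnot⟩ :=
        tVal_spec' (by omega : 1 ≤ u0 - d) (by omega : u0 - d ≤ g) hu0lam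
      have ht0 : tVal d g lam Wk ≠ g + 1 := by omega
      have hbc : ¬ (mVal d lam Wk = 0 ∨ tVal d g lam Wk = g + 1) := by
        push_neg
        exact ⟨hm0, ht0⟩
      obtain ⟨hBok, hBsum, hn1, hnW, hAebound⟩ := hBfacts hbc
      -- step value is at most the b-candidate value
      have hstepB : pair d ν (∑ i ∈ step d g lam ν k Wk, E d lam i)
          ≤ pair d ν (∑ i ∈ insert (mVal d lam Wk) (insert (d + tVal d g lam Wk)
            (if nVal d Wk = 0 then Wk else Wk.erase (d + nVal d Wk))), E d lam i) := by
        rw [hstep, if_neg hbc]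
        by_cases h2 : pair d ν (∑ i ∈ insert (iVal d g lam ν k Wk) Wk, E d lam i) ≤
            pair d ν (∑ i ∈ insert (mVal d lam Wk) (insert (d + tVal d g lam Wk)
              (if nVal d Wk = 0 then Wk else Wk.erase (d + nVal d Wk))), E d lam i)
        · rw [if_pos h2]; exact h2
        · rw [if_neg h2]
      rw [if_neg (by omega : ¬ nVal d Wk = 0)] at hstepB hBsum
      -- identify S.erase u0 with insert m Ae
      have hmmem := mVal_mem (lam := lam) hm0
      obtain ⟨hmfil, hmW⟩ := Finset.mem_sdiff.mp hmmem
      have hmIcc := Finset.mem_Icc.mp (Finset.mem_filter.mp hmfil).1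
      have hmAe : mVal d lam Wk ∉ Wk.erase (d + nVal d Wk) :=
        fun hmem => hmW (Finset.mem_of_mem_erase hmem)
      have hIAsub : insert (mVal d lam Wk) (Wk.erase (d + nVal d Wk)) ⊆ S.erase u0 := by
        rw [hFSeq]
        intro i hi
        rcases Finset.mem_insert.mp hi with rfl | hi'
        · exact hmfil
        · have hb := hAebound i hi'
          exact Finset.mem_filter.mpr ⟨Finset.mem_Icc.mpr hb,
            mem_spanOf (Finset.mem_of_mem_erase hi')⟩
      have hIAcard : (insert (mVal d lam Wk) (Wk.erase (d + nVal d Wk))).card = k := by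
        have hk1' : 1 ≤ Wk.card := Finset.card_pos.mpr ⟨_, hnW⟩
        rw [Finset.card_insert_of_notMem hmAe, Finset.card_erase_of_mem hnW, hW.1]
        rw [hW.1] at hk1'
        omega
      have hIAeq : insert (mVal d lam Wk) (Wk.erase (d + nVal d Wk)) = S.erase u0 :=
        Finset.eq_of_subset_of_card_le hIAsub (by omega)
      -- compare values
      have hSsum : pair d ν (∑ i ∈ S.erase u0, E d lam i) + pair d ν (E d lam u0)
          = pair d ν (∑ i ∈ S, E d lam i) := by
        rw [← pair_add, ← Finset.sum_erase_add S _ hu0S]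
      have hSesum : pair d ν (∑ i ∈ S.erase u0, E d lam i)
          = pair d ν (E d lam (mVal d lam Wk))
            + pair d ν (∑ i ∈ Wk.erase (d + nVal d Wk), E d lam i) := by
        rw [← hIAeq, Finset.sum_insert hmAe, pair_add]
      have hltle : pair d ν (lam (tVal d g lam Wk)) ≤ pair d ν (E d lam u0) := by
        rw [E_lam (by omega)]
        exact pair_lam_mono hmono hpos ht1 htle (by omega)
      linarith [hstepB, hBsum]

end StepSpec

section Main
variable {d g : ℕ} {lam : ℕ → Fin d → ℚ} {ν : Fin d → ℚ}

lemma base_spec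
    (hnotin : ∀ j, 1 ≤ j → j ≤ g → lam j ∉ Mlat d lam (j - 1))
    (hmono : ∀ j, 1 ≤ j → j < g → ∀ i, lam j i ≤ lam (j + 1) i)
    (hpos : ∀ i, 1 ≤ i → i ≤ d → 0 < pair d ν (E d lam i))
    (hd : 1 ≤ d) (hg : 1 ≤ g) :
    IdxOk d g lam 1 (W d g lam ν 1) ∧
    ∀ I, IdxOk d g lam 1 I →
      pair d ν (∑ i ∈ W d g lam ν 1, E d lam i) ≤ pair d ν (∑ i ∈ I, E d lam i) := by
  have hS0ne : (insert (d + 1) (Finset.Icc 1 d)).Nonempty := ⟨d + 1, Finset.mem_insert_self _ _⟩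
  set u := leastIdx d lam ν (insert (d + 1) (Finset.Icc 1 d)) with hu
  have hW1 : W d g lam ν 1 = {u} := rfl
  have humem : u ∈ insert (d + 1) (Finset.Icc 1 d) := leastIdx_mem hS0ne
  have hubound : u = d + 1 ∨ (1 ≤ u ∧ u ≤ d) := by
    rcases Finset.mem_insert.mp humem with h | h
    · exact Or.inl h
    · exact Or.inr (Finset.mem_Icc.mp h)
  have hEne : E d lam u ≠ 0 := by
    rcases hubound with h | h
    · rw [h, E_lam (by omega)]
      have he : d + 1 - d = 1 := by omega
      rw [he]
      exact lam_ne_zero hnotin le_rfl hg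
    · rw [E_eq_single d lam h.1 h.2]
      intro hc
      simpa [Pi.single_apply] using congrFun hc ⟨u - 1, by omega⟩
  rw [hW1]
  constructor
  · refine ⟨Finset.card_singleton u, ?_, ?_, ?_⟩
    · intro x hx
      rw [Finset.mem_singleton.mp hx]
      rcases hubound with h | h
      · exact Finset.mem_Icc.mpr ⟨by omega, by omega⟩
      · exact Finset.mem_Icc.mpr ⟨h.1, by omega⟩
    · exact le_trans (Finset.card_filter_le _ _) (le_of_eq (Finset.card_singleton u))
    · haveI : Unique {x // x ∈ ({u} : Finset ℕ)} :=
        { default := ⟨u, Finset.mem_singleton_self u⟩,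
          uniq := fun a => Subtype.ext (Finset.mem_singleton.mp a.2) }
      refine linearIndependent_unique_iff.mpr ?_
      have hdef : ((default : {x // x ∈ ({u} : Finset ℕ)}) : ℕ) = u :=
        Finset.mem_singleton.mp (default : {x // x ∈ ({u} : Finset ℕ)}).2
      rw [hdef]
      exact hEne
  · intro I hI
    obtain ⟨x, rfl⟩ := Finset.card_eq_one.mp hI.1
    rw [Finset.sum_singleton, Finset.sum_singleton]
    have hxIcc := Finset.mem_Icc.mp (hI.2.1 (Finset.mem_singleton_self x))
    by_cases hxd : x ≤ d
    · exact leastIdx_le hS0ne (Finset.mem_insert_of_mem (Finset.mem_Icc.mpr ⟨hxIcc.1, hxd⟩))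
    · have h1 : pair d ν (E d lam u) ≤ pair d ν (E d lam (d + 1)) :=
        leastIdx_le hS0ne (Finset.mem_insert_self _ _)
      have h2 : E d lam (d + 1) = lam 1 := by
        rw [E_lam (by omega)]
        have he : d + 1 - d = 1 := by omega
        rw [he]
      have h3 : E d lam x = lam (x - d) := E_lam (by omega)
      have h4 : pair d ν (lam 1) ≤ pair d ν (lam (x - d)) :=
        pair_lam_mono hmono hpos le_rfl (by omega) (by omega)
      rw [h2] at h1
      rw [h3]
      linarith

lemma alg_spec
    (hnotin : ∀ j, 1 ≤ j → j ≤ g → lam j ∉ Mlat d lam (j - 1))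
    (hmono : ∀ j, 1 ≤ j → j < g → ∀ i, lam j i ≤ lam (j + 1) i)
    (hpos : ∀ i, 1 ≤ i → i ≤ d → 0 < pair d ν (E d lam i))
    (hd : 1 ≤ d) (hg : 1 ≤ g) :
    ∀ k, 1 ≤ k → k ≤ d →
      IdxOk d g lam k (W d g lam ν k) ∧
      ∀ I, IdxOk d g lam k I →
        pair d ν (∑ i ∈ W d g lam ν k, E d lam i) ≤ pair d ν (∑ i ∈ I, E d lam i) := by
  intro k
  induction k with
  | zero => intro h; omega
  | succ n ih =>
    intro _ hkd
    rcases Nat.lt_or_ge n 1 with h1 | h1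
    · have hn0 : n = 0 := by omega
      subst hn0
      exact base_spec hnotin hmono hpos hd hg
    · obtain ⟨hF, hO⟩ := ih h1 (by omega)
      have hWeq : W d g lam ν (n + 1) = step d g lam ν n (W d g lam ν n) := by
        obtain ⟨m, rfl⟩ : ∃ m, n = m + 1 := ⟨n - 1, by omega⟩
        rfl
      rw [hWeq]
      exact step_spec hnotin hmono hpos (by omega) hF hO

end Main

/-- Suppose `φ_k(ν) ≤ s < φ_{k+1}(ν)`. If `1 ≤ j ≤ d` and `⟨ν, e_j⟩ ≤ s`, then `e_j`
belongs to `ℓ_k(ν)`, the `ℚ`-span of the summands of the algorithm's vector `w_k`. -/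
theorem statement7 (d g : ℕ) (lam : ℕ → Fin d → ℚ) (hd : 1 ≤ d) (hg : 1 ≤ g)
    (hnn : ∀ j, 1 ≤ j → j ≤ g → ∀ i, 0 ≤ lam j i)
    (hmono : ∀ j, 1 ≤ j → j < g → ∀ i, lam j i ≤ lam (j + 1) i)
    (hnotin : ∀ j, 1 ≤ j → j ≤ g → lam j ∉ Mlat d lam (j - 1))
    (ν : Fin d → ℚ) (hν : ν ∈ Ndual d g lam)
    (hpos : ∀ i, 1 ≤ i → i ≤ d → 0 < pair d ν (E d lam i))
    (s : ℕ) (hs : 1 ≤ s) (k : ℕ) (hk1 : 1 ≤ k) (hkd : k ≤ d)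
    (hks : phiJ d g lam k ν ≤ (s : ℚ)) (hks' : k < d → (s : ℚ) < phiJ d g lam (k + 1) ν) :
    ∀ j, 1 ≤ j → j ≤ d → pair d ν (E d lam j) ≤ (s : ℚ) →
      E d lam j ∈ ellK d g lam ν k := by
  intro j hj1 hjd hjs
  obtain ⟨hF, hO⟩ := alg_spec hnotin hmono hpos hd hg k hk1 hkd
  by_cases hkd' : k < d
  · -- if `e_j` were outside the span, we could extend `w_k` cheaply, contradicting
    -- `s < φ_{k+1}(ν)`
    by_contra hnot
    have hnot' : E d lam j ∉ spanOf d lam (W d g lam ν k) := hnot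
    have hinj := E_injOn (g := g) hnotin
    have hjIcc : j ∈ Finset.Icc 1 (d + g) := Finset.mem_Icc.mpr ⟨hj1, by omega⟩
    have hins : IdxOk d g lam (k + 1) (insert j (W d g lam ν k)) :=
      IdxOk_insert hF hjIcc hnot' (fun hc => absurd hc (by omega)) hinj
    have hjW : j ∉ W d g lam ν k := fun hmem => hnot' (mem_spanOf hmem)
    have h1 : ordJ d g lam (k + 1) ν
        ≤ pair d ν (E d lam j) + pair d ν (∑ i ∈ W d g lam ν k, E d lam i) := by
      refine le_trans (ordJ_le hins) ?_
      rw [Finset.sum_insert hjW, pair_add]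
    have hkne : (Jfin d g lam k).Nonempty :=
      ⟨_, Finset.mem_image.mpr ⟨_, Finset.mem_filter.mpr
        ⟨Finset.mem_powerset.mpr hF.2.1, hF⟩, rfl⟩⟩
    have h2 : pair d ν (∑ i ∈ W d g lam ν k, E d lam i) ≤ ordJ d g lam k ν :=
      le_ordJ hkne hO
    have hphi := hks' hkd'
    rw [phiJ, Nat.add_sub_cancel] at hphi
    linarith
  · -- k = d : the span is everything
    have hkd2 : k = d := by omega
    obtain ⟨x, hx⟩ := Finset.card_pos.mp (by rw [hF.1]; omega :
      0 < (W d g lam ν k).card)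
    haveI : Nonempty {y // y ∈ W d g lam ν k} := ⟨⟨x, hx⟩⟩
    have htop : Submodule.span ℚ
        (Set.range (fun i : {y // y ∈ W d g lam ν k} => E d lam i.1)) = ⊤ :=
      hF.2.2.2.span_eq_top_of_card_eq_finrank
        (by rw [Fintype.card_coe, hF.1, Module.finrank_pi, Fintype.card_fin]; omega)
    have himg : (E d lam) '' ↑(W d g lam ν k)
        = Set.range (fun i : {y // y ∈ W d g lam ν k} => E d lam i.1) := by
      ext y
      constructor
      · rintro ⟨i, hi, rfl⟩
        exact ⟨⟨i, hi⟩, rfl⟩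
      · rintro ⟨⟨i, hi⟩, rfl⟩
        exact ⟨i, hi, rfl⟩
    show E d lam j ∈ spanOf d lam (W d g lam ν k)
    rw [spanOf, himg, htop]
    exact Submodule.mem_top

end QO
end

section
/- Let A be a commutative ring which is a ℚ-algebra, let G be a subgroup of ℚ^d, and let f : G → A[[t]] be a map such that every f(w) is a power series with constant term 1 and f(w + w') = f(w)·f(w') for all w, w' ∈ G. Let w_1, …, w_k ∈ G be linearly independent over ℚ and let ℓ ⊆ ℚ^d be their ℚ-linear span. Then for every w ∈ G ∩ ℓ and every integer s ≥ 1, the coefficient of t^s in f(w) belongs to the ℚ-subalgebra of A generated by the coefficients of t^1, …, t^s in the series f(w_1), …, f(w_k). -/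
open PowerSeries Finset

/-- Coefficients of powers of a series, below a threshold, stay in a subalgebra. -/
lemma aux_coeff_pow_mem {A : Type*} [CommRing A] [Algebra ℚ A] (B : Subalgebra ℚ A)
    (g : PowerSeries A) (n : ℕ) (hg : ∀ j, j < n → PowerSeries.coeff j g ∈ B) :
    ∀ (m i : ℕ), i < n → PowerSeries.coeff i (g ^ m) ∈ B := by
  intro m
  induction m with
  | zero =>
    intro i hi
    rw [pow_zero, PowerSeries.coeff_one]
    split
    · exact one_mem _
    · exact zero_mem _
  | succ m ih =>
    intro i hi
    rw [pow_succ, PowerSeries.coeff_mul]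
    refine Subalgebra.sum_mem _ fun p hp => ?_
    rw [Finset.HasAntidiagonal.mem_antidiagonal] at hp
    exact mul_mem (ih p.1 (by omega)) (hg p.2 (by omega))

lemma aux_coeff_pow_sub_mem {A : Type*} [CommRing A] [Algebra ℚ A] (B : Subalgebra ℚ A)
    (g : PowerSeries A) (n : ℕ) (hn : 1 ≤ n)
    (h0 : PowerSeries.constantCoeff g = 1)
    (hg : ∀ j, j < n → PowerSeries.coeff j g ∈ B) (m : ℕ) :
    PowerSeries.coeff n (g ^ m) - (m : A) * PowerSeries.coeff n g ∈ B := by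
  obtain ⟨n', rfl⟩ : ∃ n', n = n' + 1 := ⟨n - 1, by omega⟩
  induction m with
  | zero =>
    rw [pow_zero, PowerSeries.coeff_one]
    simp only [Nat.cast_zero, zero_mul, sub_zero]
    split
    · exact one_mem _
    · exact zero_mem _
  | succ m ih =>
    have hsplit : PowerSeries.coeff (n' + 1) (g ^ (m + 1)) =
        (∑ i ∈ Finset.range n',
          PowerSeries.coeff (i + 1) (g ^ m) * PowerSeries.coeff (n' + 1 - (i + 1)) g)
        + PowerSeries.coeff (n' + 1) g + PowerSeries.coeff (n' + 1) (g ^ m) := by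
      rw [pow_succ, PowerSeries.coeff_mul, Finset.Nat.sum_antidiagonal_eq_sum_range_succ_mk,
        Finset.sum_range_succ, Finset.sum_range_succ']
      have hc0 : PowerSeries.coeff 0 (g ^ m) = 1 := by
        rw [PowerSeries.coeff_zero_eq_constantCoeff, map_pow, h0, one_pow]
      have hcn : PowerSeries.coeff (n' + 1 - (n' + 1)) g = 1 := by
        simp [PowerSeries.coeff_zero_eq_constantCoeff, h0]
      rw [hc0, hcn, mul_one, one_mul]
      simp only [Nat.sub_zero]
      try ring
    have hmid : (∑ i ∈ Finset.range n',
        PowerSeries.coeff (i + 1) (g ^ m) * PowerSeries.coeff (n' + 1 - (i + 1)) g) ∈ B := by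
      refine Subalgebra.sum_mem _ fun i hi => ?_
      rw [Finset.mem_range] at hi
      exact mul_mem (aux_coeff_pow_mem B g (n' + 1) hg m (i + 1) (by omega)) (hg _ (by omega))
    have : PowerSeries.coeff (n' + 1) (g ^ (m + 1)) -
        ((m : A) + 1) * PowerSeries.coeff (n' + 1) g =
        (PowerSeries.coeff (n' + 1) (g ^ m) - (m : A) * PowerSeries.coeff (n' + 1) g)
        + (∑ i ∈ Finset.range n',
          PowerSeries.coeff (i + 1) (g ^ m) * PowerSeries.coeff (n' + 1 - (i + 1)) g) := by
      rw [hsplit]; ring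
    rw [Nat.cast_add, Nat.cast_one, this]
    exact add_mem ih hmid

lemma aux_coeff_inv_mem {A : Type*} [CommRing A] [Algebra ℚ A] (B : Subalgebra ℚ A)
    (g h : PowerSeries A) (s : ℕ) (hgh : g * h = 1)
    (h0 : PowerSeries.constantCoeff g = 1)
    (hg : ∀ j, j ≤ s → PowerSeries.coeff j g ∈ B) :
    ∀ j, j ≤ s → PowerSeries.coeff j h ∈ B := by
  have hh0 : PowerSeries.constantCoeff h = 1 := by
    have := congrArg (PowerSeries.constantCoeff) hgh
    rw [map_mul, map_one, h0, one_mul] at this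
    exact this
  intro j
  induction j using Nat.strong_induction_on with
  | _ j ih =>
    intro hj
    match j with
    | 0 => rw [PowerSeries.coeff_zero_eq_constantCoeff, hh0]; exact one_mem _
    | (n + 1) =>
      have hz : PowerSeries.coeff (n + 1) (g * h) = 0 := by
        rw [hgh, PowerSeries.coeff_one]; simp
      rw [PowerSeries.coeff_mul, Finset.Nat.sum_antidiagonal_eq_sum_range_succ_mk,
        Finset.sum_range_succ'] at hz
      have hc0 : PowerSeries.coeff 0 g = 1 := by
        rw [PowerSeries.coeff_zero_eq_constantCoeff, h0]
      rw [hc0, one_mul, Nat.sub_zero] at hz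
      simp only [Prod.fst, Prod.snd] at hz
      rw [eq_neg_of_add_eq_zero_right hz]
      refine neg_mem (Subalgebra.sum_mem _ fun i hi => ?_)
      rw [Finset.mem_range] at hi
      exact mul_mem (hg _ (by omega)) (ih _ (by omega) (by omega))

/-- Let `A` be a commutative ring which is a `ℚ`-algebra, `G` a subgroup of `ℚ^d`, and
`f : G → A[[t]]` a map such that every `f(w)` is a power series with constant term `1`
and `f(w + w') = f(w)·f(w')` for all `w, w' ∈ G`. Let `w_1, …, w_k ∈ G` be linearly
independent over `ℚ` with `ℚ`-linear span `ℓ`. Then for every `w ∈ G ∩ ℓ` and every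
integer `s ≥ 1`, the coefficient of `t^s` in `f(w)` belongs to the `ℚ`-subalgebra of `A`
generated by the coefficients of `t^1, …, t^s` in the series `f(w_1), …, f(w_k)`. -/
theorem statement10 (d : ℕ) (A : Type*) [CommRing A] [Algebra ℚ A]
    (G : AddSubgroup (Fin d → ℚ)) (f : G → PowerSeries A)
    (hconst : ∀ w, PowerSeries.constantCoeff (f w) = 1)
    (hmul : ∀ w w', f (w + w') = f w * f w')
    (k : ℕ) (wv : Fin k → G)
    (hind : LinearIndependent ℚ (fun l => (wv l : Fin d → ℚ)))
    (v : G)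
    (hv : (v : Fin d → ℚ) ∈ Submodule.span ℚ (Set.range fun l => (wv l : Fin d → ℚ)))
    (s : ℕ) (hs : 1 ≤ s) :
    PowerSeries.coeff s (f v) ∈
      Algebra.adjoin ℚ { a : A | ∃ (l : Fin k) (j : ℕ), 1 ≤ j ∧ j ≤ s ∧
        a = PowerSeries.coeff j (f (wv l)) } := by
  set B := Algebra.adjoin ℚ { a : A | ∃ (l : Fin k) (j : ℕ), 1 ≤ j ∧ j ≤ s ∧
        a = PowerSeries.coeff j (f (wv l)) } with hB
  -- f 0 = 1
  have hunit : ∀ w, IsUnit (f w) := fun w =>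
    IsUnit.of_mul_eq_one _ (PowerSeries.mul_invOfUnit (f w) 1 (by rw [hconst w]; rfl))
  have hf0 : f 0 = 1 := by
    have h1 : f 0 * f 0 = f 0 * 1 := by rw [mul_one, ← hmul]; simp
    exact (hunit 0).mul_left_cancel h1
  -- closure of the coefficient property under multiplication
  have hPmul : ∀ (g h : PowerSeries A), (∀ j, j ≤ s → PowerSeries.coeff j g ∈ B) →
      (∀ j, j ≤ s → PowerSeries.coeff j h ∈ B) →
      ∀ j, j ≤ s → PowerSeries.coeff j (g * h) ∈ B := by
    intro g h hg hh j hj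
    rw [PowerSeries.coeff_mul]
    refine Subalgebra.sum_mem _ fun p hp => ?_
    rw [Finset.HasAntidiagonal.mem_antidiagonal] at hp
    exact mul_mem (hg _ (by omega)) (hh _ (by omega))
  have hP1 : ∀ j, j ≤ s → PowerSeries.coeff j (1 : PowerSeries A) ∈ B := by
    intro j hj
    rw [PowerSeries.coeff_one]
    split
    · exact one_mem _
    · exact zero_mem _
  -- negation
  have hPneg : ∀ (w : G), (∀ j, j ≤ s → PowerSeries.coeff j (f w) ∈ B) →
      ∀ j, j ≤ s → PowerSeries.coeff j (f (-w)) ∈ B := by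
    intro w hw
    refine aux_coeff_inv_mem B (f w) (f (-w)) s ?_ (hconst w) hw
    rw [← hmul]; simp [hf0]
  -- integer multiples
  have hPzsmul : ∀ (m : ℤ) (w : G), (∀ j, j ≤ s → PowerSeries.coeff j (f w) ∈ B) →
      ∀ j, j ≤ s → PowerSeries.coeff j (f (m • w)) ∈ B := by
    intro m w hw
    induction m using Int.induction_on with
    | zero => rw [zero_smul, hf0]; exact hP1
    | succ m ihm =>
      have : ((m : ℤ) + 1) • w = (m : ℤ) • w + w := by rw [add_smul, one_smul]
      rw [this, hmul]
      exact hPmul _ _ ihm hw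
    | pred m ihm =>
      have : (-(m : ℤ) - 1) • w = (-(m : ℤ)) • w + (-w) := by
        rw [sub_smul, one_smul, sub_eq_add_neg]
      rw [this, hmul]
      exact hPmul _ _ ihm (hPneg w hw)
  -- base case: the generators
  have hwv : ∀ (l : Fin k) (j : ℕ), j ≤ s → PowerSeries.coeff j (f (wv l)) ∈ B := by
    intro l j hj
    match j with
    | 0 =>
      rw [PowerSeries.coeff_zero_eq_constantCoeff, hconst]
      exact one_mem _
    | (n + 1) =>
      exact Algebra.subset_adjoin ⟨l, n + 1, by omega, hj, rfl⟩
  -- integer combinations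
  have hPsum : ∀ (c : Fin k → ℤ) (t : Finset (Fin k)),
      ∀ j, j ≤ s → PowerSeries.coeff j (f (∑ l ∈ t, c l • wv l)) ∈ B := by
    intro c t
    induction t using Finset.induction_on with
    | empty => rw [Finset.sum_empty, hf0]; exact hP1
    | insert a t hnotmem ih =>
      rw [Finset.sum_insert hnotmem, hmul]
      exact hPmul _ _ (hPzsmul _ _ (hwv _)) ih
  -- decompose v
  rw [Submodule.mem_span_range_iff_exists_fun] at hv
  obtain ⟨c, hc⟩ := hv
  set q : ℕ := ∏ l, (c l).den with hq
  have hq0 : 0 < q := Finset.prod_pos fun l _ => (c l).pos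
  have hden : ∀ l, (c l).den ∣ q := fun l => Finset.dvd_prod_of_mem _ (Finset.mem_univ l)
  set nn : Fin k → ℤ := fun l => ((q / (c l).den : ℕ) : ℤ) * (c l).num with hnn
  have hnl : ∀ l, ((nn l : ℚ)) = (q : ℚ) * c l := by
    intro l
    have h1 : ((c l).den : ℚ) ≠ 0 := by exact_mod_cast (c l).den_nz
    have h2 : ((q / (c l).den : ℕ) : ℚ) = (q : ℚ) / ((c l).den : ℚ) :=
      Nat.cast_div (hden l) h1
    have h3 : (c l : ℚ) = ((c l).num : ℚ) / ((c l).den : ℚ) := (Rat.num_div_den (c l)).symm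
    show ((((q / (c l).den : ℕ) : ℤ) * (c l).num : ℤ) : ℚ) = (q : ℚ) * c l
    rw [Int.cast_mul, Int.cast_natCast, h2]
    conv_rhs => rw [h3]
    ring
  have hqv : (q • v : G) = ∑ l, nn l • wv l := by
    apply Subtype.ext
    have hcoe : ((∑ l, nn l • wv l : G) : Fin d → ℚ) = ∑ l, (nn l : ℚ) • (wv l : Fin d → ℚ) := by
      push_cast
      exact Finset.sum_congr rfl fun l _ => (Int.cast_smul_eq_zsmul ℚ (nn l) _).symm
    rw [hcoe]
    have : ((q • v : G) : Fin d → ℚ) = (q : ℚ) • (v : Fin d → ℚ) := by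
      push_cast
      exact (Nat.cast_smul_eq_nsmul ℚ q _).symm
    rw [this, ← hc, Finset.smul_sum]
    refine Finset.sum_congr rfl fun l _ => ?_
    rw [smul_smul, hnl l]
  -- f of natural multiples is a power
  have hpow : ∀ (m : ℕ) (w : G), f (m • w) = (f w) ^ m := by
    intro m w
    induction m with
    | zero => rw [zero_smul, pow_zero, hf0]
    | succ m ih => rw [succ_nsmul, hmul, ih, pow_succ]
  -- main induction
  suffices h : ∀ n, n ≤ s → PowerSeries.coeff n (f v) ∈ B by exact h s le_rfl
  intro n
  induction n using Nat.strong_induction_on with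
  | _ n ih =>
    intro hn
    match n with
    | 0 =>
      rw [PowerSeries.coeff_zero_eq_constantCoeff, hconst]
      exact one_mem _
    | (n + 1) =>
      have hlow : ∀ j, j < n + 1 → PowerSeries.coeff j (f v) ∈ B :=
        fun j hj => ih j hj (by omega)
      have h1 := aux_coeff_pow_sub_mem B (f v) (n + 1) (by omega) (hconst v) hlow q
      have h2 : PowerSeries.coeff (n + 1) ((f v) ^ q) ∈ B := by
        rw [← hpow q v, hqv]
        exact hPsum nn Finset.univ (n + 1) hn
      have h3 : (q : A) * PowerSeries.coeff (n + 1) (f v) ∈ B := by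
        have := B.sub_mem h2 h1
        simpa using this
      have h4 : ((q : ℚ)⁻¹) • ((q : A) * PowerSeries.coeff (n + 1) (f v)) =
          PowerSeries.coeff (n + 1) (f v) := by
        have hqA : (q : A) = algebraMap ℚ A (q : ℚ) := by
          rw [map_natCast]
        rw [hqA, Algebra.smul_def, ← mul_assoc, ← map_mul,
          inv_mul_cancel₀ (by exact_mod_cast hq0.ne' : (q : ℚ) ≠ 0), map_one, one_mul]
      rw [← h4]
      exact B.smul_mem h3 _
end
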